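/- Let $\mathcal{G} = (V, E)$ be a finite connected graph with vertex set $V = \{v_1, \dots, v_n\}$ carrying a linear order. Call a subset $S \subseteq V$ a UDS set if for every $j \in S$ and every $i \in V$ with $i < j$ and $\{i, j\} \in E$, one has $i \in S$. Then there exist real numbers $x_1, \dots, x_n$ assigned to the vertices such that (1) $\sum_{i=1}^n x_i = 0$, and (2) for every proper nonempty UDS subset $S \subsetneq V$, $\sum_{v_i \in S} x_i > 0$. -/
import Mathlib

open Finset

section aux

variable {n : ℕ} {G : SimpleGraph (Fin n)}

/-- boundary edge of a walk leaving a set -/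
lemma exists_boundary_edge {S : Finset (Fin n)} :
    ∀ {s t : Fin n}, G.Walk s t → s ∈ S → t ∉ S →
      ∃ u v, G.Adj u v ∧ u ∈ S ∧ v ∉ S := by
  intro s t p
  induction p with
  | nil => intro hs ht; exact absurd hs ht
  | @cons a b c h p ih =>
    intro hs ht
    by_cases hb : b ∈ S
    · exact ih hb ht
    · exact ⟨a, b, h, hs, hb⟩

end aux

/-- Graph lemma: for a finite connected graph on the ordered vertex set `Fin n`,
one can assign reals `x i` to the vertices with total sum zero such that every
proper nonempty UDS subset has positive sum.  A subset `S` is UDS if for every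
`j ∈ S` and every `i < j` adjacent to `j`, also `i ∈ S`. -/
theorem stmt_2 (n : ℕ) (G : SimpleGraph (Fin n)) (hconn : G.Connected) :
    ∃ x : Fin n → ℝ,
      (∑ i, x i = 0) ∧
      ∀ S : Finset (Fin n), S.Nonempty → S ≠ Finset.univ →
        (∀ j ∈ S, ∀ i : Fin n, i < j → G.Adj i j → i ∈ S) →
        0 < ∑ i ∈ S, x i := by
  classical
  set r : Fin n → Fin n → Prop := fun i j => i < j ∧ G.Adj i j with hr
  set tc : Fin n → Fin n → Prop := Relation.TransGen r with htc
  set χ : Prop → ℝ := fun p => if h : p then 1 else 0 with hχ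
  have hχ0 : ∀ p, 0 ≤ χ p := by
    intro p; simp only [hχ]; split <;> norm_num
  refine ⟨fun i => ∑ j, (χ (tc i j) - χ (tc j i)), ?_, ?_⟩
  · simp only [Finset.sum_sub_distrib]
    rw [Finset.sum_comm (f := fun i j => χ (tc j i))]
    ring
  · intro S hne hproper hUDS
    -- S is closed downward under tc
    have hdown : ∀ i j, tc i j → j ∈ S → i ∈ S := by
      intro i j h
      induction h with
      | single h => exact fun hj => hUDS _ hj _ h.1 h.2
      | tail _ h ih => exact fun hc => ih (hUDS _ hc _ h.1 h.2)
    -- boundary pair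
    obtain ⟨s, hs⟩ := hne
    obtain ⟨t, ht⟩ : ∃ t, t ∉ S := by
      by_contra h
      push_neg at h
      exact hproper (Finset.eq_univ_iff_forall.2 h)
    obtain ⟨u, v, huv, hu, hv⟩ :=
      exists_boundary_edge ((hconn.preconnected s t).some) hs ht
    have htuv : tc u v := by
      rcases lt_or_gt_of_ne huv.ne with h | h
      · exact Relation.TransGen.single ⟨h, huv⟩
      · exact absurd (hUDS u hu v h huv.symm) hv
    -- rewrite the sum
    have hsplit : ∀ i, ∑ j, χ (tc i j)
        = ∑ j ∈ S, χ (tc i j) + ∑ j ∈ Sᶜ, χ (tc i j) := fun i =>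
      (Finset.sum_add_sum_compl S _).symm
    have hsplit2 : ∀ i ∈ S, ∑ j, χ (tc j i) = ∑ j ∈ S, χ (tc j i) := by
      intro i hi
      rw [← Finset.sum_add_sum_compl S (fun j => χ (tc j i))]
      have : ∑ j ∈ Sᶜ, χ (tc j i) = 0 := by
        apply Finset.sum_eq_zero
        intro j hj
        simp only [Finset.mem_compl] at hj
        have : ¬ tc j i := fun h => hj (hdown j i h hi)
        simp [hχ, this]
      rw [this, add_zero]
    have key : ∑ i ∈ S, ∑ j, (χ (tc i j) - χ (tc j i))
        = ∑ i ∈ S, ∑ j ∈ Sᶜ, χ (tc i j) := by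
      simp only [Finset.sum_sub_distrib]
      rw [Finset.sum_congr rfl hsplit2,
        Finset.sum_congr rfl (fun i _ => hsplit i)]
      rw [Finset.sum_add_distrib]
      have : ∑ i ∈ S, ∑ j ∈ S, χ (tc i j) = ∑ i ∈ S, ∑ j ∈ S, χ (tc j i) :=
        Finset.sum_comm
      rw [this]; ring
    rw [key]
    have huS : u ∈ S := hu
    have hvC : v ∈ Sᶜ := Finset.mem_compl.2 hv
    have hpos : (0:ℝ) < ∑ j ∈ Sᶜ, χ (tc u j) := by
      have h1 : χ (tc u v) = 1 := by simp [hχ, htuv]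
      have h2 : χ (tc u v) ≤ ∑ j ∈ Sᶜ, χ (tc u j) :=
        Finset.single_le_sum (fun j _ => hχ0 _) hvC
      rw [h1] at h2; linarith
    have h3 : ∑ j ∈ Sᶜ, χ (tc u j) ≤ ∑ i ∈ S, ∑ j ∈ Sᶜ, χ (tc i j) :=
      Finset.single_le_sum (fun i _ => Finset.sum_nonneg fun j _ => hχ0 _) huS
    linarith
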